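/- For every prime power q and every m ≥ 1, the covering radius of the first-order generalized Reed–Muller code R_q(1,m) (as a code of length q^m) satisfies ρ(1,m) ≤ (q-1)q^{m-1} − q^{m/2 - 1}. -/

import Mathlib

open Finset

namespace RMcovAux

set_option linter.unusedSectionVars false

variable {F : Type} [Field F] [Fintype F] [DecidableEq F] {m : ℕ}

lemma sum_update_mul (a v : Fin m → F) (j : Fin m) (t : F) :
    ∑ i, Function.update a j t i * v i = (∑ i, a i * v i) + (t - a j) * v j := by
  have h : (fun i => Function.update a j t i * v i)
      = Function.update (fun i => a i * v i) j (t * v j) := by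
    funext i
    rcases eq_or_ne i j with rfl | h
    · simp
    · simp [Function.update_of_ne h]
  rw [show (∑ i, Function.update a j t i * v i)
        = ∑ i, Function.update (fun i => a i * v i) j (t * v j) i by rw [← h],
      Finset.sum_update_of_mem (mem_univ j),
      Finset.sum_eq_add_sum_sdiff_singleton_of_mem (mem_univ j) (fun i => a i * v i)]
  ring

lemma card_fun_cast : ((Fintype.card (Fin m → F) : ℝ)) = (Fintype.card F : ℝ) ^ m := by
  rw [show (Fintype.card (Fin m → F)) = Fintype.card F ^ m by simp [Fintype.card_fun]]
  push_cast
  ring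

/-- Number of solutions of a nontrivial linear equation, in indicator-sum form. -/
lemma fiber_sum (v : Fin m → F) (hv : v ≠ 0) (c : F) :
    (∑ a : Fin m → F, if (∑ i, a i * v i) = c then (1:ℝ) else 0)
      = (Fintype.card F : ℝ) ^ m / (Fintype.card F : ℝ) := by
  classical
  obtain ⟨j, hj⟩ : ∃ j, v j ≠ 0 := by
    by_contra h
    push_neg at h
    exact hv (funext fun i => h i)
  set S : F → ℝ := fun c => ∑ a : Fin m → F, if (∑ i, a i * v i) = c then (1:ℝ) else 0 with hS
  have hconst : ∀ c₁ c₂ : F, S c₁ = S c₂ := by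
    intro c₁ c₂
    set d : F := (c₂ - c₁) / v j with hd
    have hbij : Function.Bijective (fun a : Fin m → F => Function.update a j (a j + d)) := by
      apply Function.bijective_iff_has_inverse.mpr
      refine ⟨fun a => Function.update a j (a j - d), fun a => ?_, fun a => ?_⟩ <;>
      · funext i
        rcases eq_or_ne i j with rfl | h <;>
          simp [Function.update_of_ne, *]
    refine Fintype.sum_bijective _ hbij _ _ (fun a => ?_)
    have hupd : ∑ i, Function.update a j (a j + d) i * v i
        = (∑ i, a i * v i) + (c₂ - c₁) := by
      rw [sum_update_mul]
      have : (a j + d - a j) * v j = c₂ - c₁ := by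
        rw [add_sub_cancel_left, hd, div_mul_cancel₀ _ hj]
      rw [this]
    rw [hupd]
    exact if_congr ⟨fun h => by linear_combination h, fun h => by linear_combination h⟩ rfl rfl
  have htot : ∑ c' : F, S c' = (Fintype.card F : ℝ) ^ m := by
    rw [hS]
    rw [Finset.sum_comm]
    have h1 : ∀ a : Fin m → F, (∑ c' : F, if (∑ i, a i * v i) = c' then (1:ℝ) else 0) = 1 := by
      intro a
      have h2 : ∀ c' : F, (if (∑ i, a i * v i) = c' then (1:ℝ) else 0)
          = (if c' = (∑ i, a i * v i) then (1:ℝ) else 0) :=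
        fun c' => if_congr eq_comm rfl rfl
      rw [Finset.sum_congr rfl (fun c' _ => h2 c'),
        Finset.sum_ite_eq' univ ((∑ i, a i * v i)) (fun _ => (1:ℝ))]
      simp
    rw [Finset.sum_congr rfl (fun a _ => h1 a)]
    rw [Finset.sum_const, card_univ, nsmul_eq_mul, card_fun_cast, mul_one]
  have hcard : (0:ℝ) < (Fintype.card F : ℝ) := by
    exact_mod_cast Fintype.card_pos
  have hkey : (Fintype.card F : ℝ) * S c = (Fintype.card F : ℝ) ^ m := by
    rw [← htot, Finset.sum_congr rfl (fun c' _ => hconst c' c)]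
    rw [Finset.sum_const, card_univ, nsmul_eq_mul]
  show S c = _
  rw [eq_div_iff (ne_of_gt hcard)]
  linear_combination hkey

variable (f : (Fin m → F) → F)

/-- The number of agreements of `f` with the affine function given by `(a, b)`, as a real. -/
noncomputable def Nf (a : Fin m → F) (b : F) : ℝ :=
  ∑ x : Fin m → F, if f x = (∑ i, a i * x i) + b then (1:ℝ) else 0

lemma sum_ite_b (c L : F) : (∑ b : F, if c = L + b then (1:ℝ) else 0) = 1 := by
  have h : ∀ b : F, (if c = L + b then (1:ℝ) else 0) = (if b = c - L then (1:ℝ) else 0) :=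
    fun b => if_congr ⟨fun h => by rw [h]; ring, fun h => by rw [h]; ring⟩ rfl rfl
  rw [Finset.sum_congr rfl (fun b _ => h b),
    Finset.sum_ite_eq' univ (c - L) (fun _ => (1:ℝ))]
  simp

lemma Nf_sum_b (a : Fin m → F) : ∑ b : F, Nf f a b = (Fintype.card F : ℝ) ^ m := by
  unfold Nf
  have hcomm : (∑ b : F, ∑ x : Fin m → F, if f x = (∑ i, a i * x i) + b then (1:ℝ) else 0)
      = ∑ x : Fin m → F, ∑ b : F, if f x = (∑ i, a i * x i) + b then (1:ℝ) else 0 :=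
    Finset.sum_comm
  rw [hcomm]
  rw [Finset.sum_congr rfl (fun x (_ : x ∈ univ) => sum_ite_b (f x) (∑ i, a i * x i))]
  rw [Finset.sum_const, card_univ, nsmul_eq_mul, card_fun_cast, mul_one]

lemma swap4 {α β γ δ : Type} [Fintype α] [Fintype β] [Fintype γ] [Fintype δ]
    (g : α → β → γ → δ → ℝ) :
    ∑ a : α, ∑ b : β, ∑ x : γ, ∑ y : δ, g a b x y
      = ∑ x : γ, ∑ y : δ, ∑ a : α, ∑ b : β, g a b x y := by
  calc ∑ a : α, ∑ b : β, ∑ x : γ, ∑ y : δ, g a b x y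
      = ∑ p : α × β, ∑ x : γ, ∑ y : δ, g p.1 p.2 x y := by
        rw [Fintype.sum_prod_type]
    _ = ∑ p : α × β, ∑ r : γ × δ, g p.1 p.2 r.1 r.2 := by
        exact Finset.sum_congr rfl (fun p _ => by rw [Fintype.sum_prod_type])
    _ = ∑ r : γ × δ, ∑ p : α × β, g p.1 p.2 r.1 r.2 := Finset.sum_comm
    _ = ∑ r : γ × δ, ∑ a : α, ∑ b : β, g a b r.1 r.2 := by
        exact Finset.sum_congr rfl (fun r _ => by rw [Fintype.sum_prod_type])
    _ = ∑ x : γ, ∑ y : δ, ∑ a : α, ∑ b : β, g a b x y := by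
        rw [Fintype.sum_prod_type]

lemma Nf_sum_sq :
    ∑ a : Fin m → F, ∑ b : F, Nf f a b * Nf f a b
      = (Fintype.card F : ℝ) ^ m * (Fintype.card F : ℝ) ^ m
        + ((Fintype.card F : ℝ) ^ m * (Fintype.card F : ℝ) ^ m - (Fintype.card F : ℝ) ^ m)
          * ((Fintype.card F : ℝ) ^ m / (Fintype.card F : ℝ)) := by
  classical
  have hexp : ∀ (a : Fin m → F) (b : F), Nf f a b * Nf f a b
      = ∑ x : Fin m → F, ∑ y : Fin m → F,
          (if f x = (∑ i, a i * x i) + b then (1:ℝ) else 0)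
            * (if f y = (∑ i, a i * y i) + b then (1:ℝ) else 0) := by
    intro a b
    exact Finset.sum_mul_sum univ univ _ _
  rw [Finset.sum_congr rfl (fun a (_ : a ∈ univ) =>
    Finset.sum_congr rfl (fun b (_ : b ∈ univ) => hexp a b))]
  rw [swap4 (fun (a : Fin m → F) (b : F) (x y : Fin m → F) =>
    (if f x = (∑ i, a i * x i) + b then (1:ℝ) else 0)
      * (if f y = (∑ i, a i * y i) + b then (1:ℝ) else 0))]
  -- inner double sum
  have hinner : ∀ x y : Fin m → F,
      (∑ a : Fin m → F, ∑ b : F,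
        (if f x = (∑ i, a i * x i) + b then (1:ℝ) else 0)
          * (if f y = (∑ i, a i * y i) + b then (1:ℝ) else 0))
      = if y = x then (Fintype.card F : ℝ) ^ m else (Fintype.card F : ℝ) ^ m / (Fintype.card F : ℝ) := by
    intro x y
    rcases eq_or_ne y x with rfl | hxy
    · rw [if_pos rfl]
      have h1 : ∀ (a : Fin m → F) (b : F),
          ((if f y = (∑ i, a i * y i) + b then (1:ℝ) else 0)
            * (if f y = (∑ i, a i * y i) + b then (1:ℝ) else 0))
          = (if f y = (∑ i, a i * y i) + b then (1:ℝ) else 0) := by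
        intro a b
        by_cases h : f y = (∑ i, a i * y i) + b <;> simp [h]
      have h2 : ∀ a : Fin m → F,
          (∑ b : F, (if f y = (∑ i, a i * y i) + b then (1:ℝ) else 0)
            * (if f y = (∑ i, a i * y i) + b then (1:ℝ) else 0)) = 1 := by
        intro a
        rw [Finset.sum_congr rfl (fun b (_ : b ∈ univ) => h1 a b)]
        exact sum_ite_b _ _
      rw [Finset.sum_congr rfl (fun a (_ : a ∈ univ) => h2 a)]
      rw [Finset.sum_const, card_univ, nsmul_eq_mul, card_fun_cast, mul_one]
    · rw [if_neg hxy]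
      have hb : ∀ a : Fin m → F, (∑ b : F,
          (if f x = (∑ i, a i * x i) + b then (1:ℝ) else 0)
            * (if f y = (∑ i, a i * y i) + b then (1:ℝ) else 0))
          = if (∑ i, a i * (x i - y i)) = f x - f y then (1:ℝ) else 0 := by
        intro a
        have hsub : ∑ i, a i * (x i - y i) = (∑ i, a i * x i) - (∑ i, a i * y i) := by
          simp_rw [mul_sub]
          rw [Finset.sum_sub_distrib]
        by_cases hQ : (∑ i, a i * (x i - y i)) = f x - f y
        · rw [if_pos hQ]
          rw [hsub] at hQ
          have h3 : ∀ b : F,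
              ((if f x = (∑ i, a i * x i) + b then (1:ℝ) else 0)
                * (if f y = (∑ i, a i * y i) + b then (1:ℝ) else 0))
              = (if f x = (∑ i, a i * x i) + b then (1:ℝ) else 0) := by
            intro b
            by_cases h1 : f x = (∑ i, a i * x i) + b
            · have h2 : f y = (∑ i, a i * y i) + b := by linear_combination h1 + hQ
              simp [h1, h2]
            · simp [h1]
          rw [Finset.sum_congr rfl (fun b (_ : b ∈ univ) => h3 b)]
          exact sum_ite_b _ _
        · rw [if_neg hQ]
          rw [hsub] at hQ
          apply Finset.sum_eq_zero
          intro b _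
          by_cases h1 : f x = (∑ i, a i * x i) + b
          · have h2 : ¬ f y = (∑ i, a i * y i) + b := by
              intro h2
              exact hQ (by linear_combination h2 - h1)
            simp [h1, h2]
          · simp [h1]
      rw [Finset.sum_congr rfl (fun a (_ : a ∈ univ) => hb a)]
      apply fiber_sum
      intro h0
      apply hxy
      funext i
      have := congrFun h0 i
      simp only [Pi.zero_apply] at this
      exact (sub_eq_zero.mp this).symm
  rw [Finset.sum_congr rfl (fun x (_ : x ∈ univ) =>
    Finset.sum_congr rfl (fun y (_ : y ∈ univ) => hinner x y))]
  have hsplit : ∀ (y x : Fin m → F), (if y = x then (Fintype.card F : ℝ) ^ m else (Fintype.card F : ℝ) ^ m / (Fintype.card F : ℝ))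
      = (Fintype.card F : ℝ) ^ m / (Fintype.card F : ℝ) + (if y = x then (Fintype.card F : ℝ) ^ m - (Fintype.card F : ℝ) ^ m / (Fintype.card F : ℝ) else 0) := by
    intro y x
    by_cases h : y = x <;> simp [h]
  have hcount : ∀ x : Fin m → F,
      (∑ y : Fin m → F, if y = x then (Fintype.card F : ℝ) ^ m else (Fintype.card F : ℝ) ^ m / (Fintype.card F : ℝ))
        = (Fintype.card F : ℝ) ^ m * ((Fintype.card F : ℝ) ^ m / (Fintype.card F : ℝ)) + ((Fintype.card F : ℝ) ^ m - (Fintype.card F : ℝ) ^ m / (Fintype.card F : ℝ)) := by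
    intro x
    rw [Finset.sum_congr rfl (fun y (_ : y ∈ univ) => hsplit y x)]
    rw [Finset.sum_add_distrib, Finset.sum_ite_eq' univ x (fun _ => (Fintype.card F : ℝ) ^ m - (Fintype.card F : ℝ) ^ m / (Fintype.card F : ℝ))]
    rw [Finset.sum_const, card_univ, nsmul_eq_mul, card_fun_cast]
    simp
  rw [Finset.sum_congr rfl (fun x (_ : x ∈ univ) => hcount x)]
  rw [Finset.sum_const, card_univ, nsmul_eq_mul, card_fun_cast]
  ring

/-- The key existence statement: some affine function agrees with `f` often. -/
lemma exists_affine_close (hm : 1 ≤ m) :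
    ∃ a : Fin m → F, ∃ b : F,
      (hammingDist f (fun x => (∑ i, a i * x i) + b) : ℝ) ≤
        ((Fintype.card F : ℝ) - 1) * (Fintype.card F : ℝ) ^ (m - 1)
          - (Fintype.card F : ℝ) ^ ((m : ℝ) / 2 - 1) := by
  classical
  have hk2 : (2:ℝ) ≤ (Fintype.card F : ℝ) := by
    have : 2 ≤ Fintype.card F := Fintype.one_lt_card
    exact_mod_cast this
  have hk0 : (0:ℝ) < (Fintype.card F : ℝ) := by linarith
  have hkm0 : (0:ℝ) < (Fintype.card F : ℝ) ^ m := by positivity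
  have hne : (Fintype.card F : ℝ) ≠ 0 := ne_of_gt hk0
  set E : (Fin m → F) → F → ℝ := fun a b => Nf f a b - (Fintype.card F : ℝ) ^ m / (Fintype.card F : ℝ) with hE
  have hEab : ∀ (a : Fin m → F) (b : F), E a b = Nf f a b - (Fintype.card F : ℝ) ^ m / (Fintype.card F : ℝ) := fun a b => rfl
  have hE1 : ∀ a : Fin m → F, ∑ b : F, E a b = 0 := by
    intro a
    rw [Finset.sum_congr rfl (fun b (_ : b ∈ univ) => hEab a b)]
    rw [Finset.sum_sub_distrib, Nf_sum_b, Finset.sum_const, card_univ, nsmul_eq_mul]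
    field_simp
    ring
  have hE2 : ∑ a : Fin m → F, ∑ b : F, E a b * E a b
      = ((Fintype.card F : ℝ) - 1) * ((Fintype.card F : ℝ) ^ m * (Fintype.card F : ℝ) ^ m) / (Fintype.card F : ℝ) := by
    have hpt : ∀ (a : Fin m → F) (b : F), E a b * E a b
        = Nf f a b * Nf f a b - (2 * ((Fintype.card F : ℝ) ^ m / (Fintype.card F : ℝ))) * Nf f a b + ((Fintype.card F : ℝ) ^ m / (Fintype.card F : ℝ)) * ((Fintype.card F : ℝ) ^ m / (Fintype.card F : ℝ)) := by
      intro a b; rw [hEab]; ring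
    have hper : ∀ a : Fin m → F, ∑ b : F, E a b * E a b
        = (∑ b : F, Nf f a b * Nf f a b) - (2 * ((Fintype.card F : ℝ) ^ m / (Fintype.card F : ℝ))) * (Fintype.card F : ℝ) ^ m
            + (Fintype.card F : ℝ) * (((Fintype.card F : ℝ) ^ m / (Fintype.card F : ℝ)) * ((Fintype.card F : ℝ) ^ m / (Fintype.card F : ℝ))) := by
      intro a
      rw [Finset.sum_congr rfl (fun b (_ : b ∈ univ) => hpt a b)]
      rw [Finset.sum_add_distrib, Finset.sum_sub_distrib, ← Finset.mul_sum, Nf_sum_b,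
        Finset.sum_const, card_univ, nsmul_eq_mul]
    rw [Finset.sum_congr rfl (fun a (_ : a ∈ univ) => hper a)]
    rw [Finset.sum_add_distrib, Finset.sum_sub_distrib, Nf_sum_sq f,
      Finset.sum_const, Finset.sum_const, card_univ, nsmul_eq_mul, nsmul_eq_mul,
      card_fun_cast]
    field_simp
    ring
  obtain ⟨p, -, hp⟩ := Finset.exists_max_image (univ : Finset ((Fin m → F) × F))
    (fun p => E p.1 p.2) ⟨(0, 0), mem_univ _⟩
  set t : ℝ := E p.1 p.2 with hT
  have hub : ∀ (a : Fin m → F) (b : F), E a b ≤ t := fun a b => hp (a, b) (mem_univ _)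
  have ht0 : 0 ≤ t := by
    have hsum := hE1 p.1
    have hle : ∑ b : F, E p.1 b ≤ ∑ _b : F, t :=
      Finset.sum_le_sum (fun b _ => hub p.1 b)
    rw [hsum, Finset.sum_const, card_univ, nsmul_eq_mul] at hle
    nlinarith
  have hlb : ∀ (a : Fin m → F) (b : F), -(((Fintype.card F : ℝ) - 1) * t) ≤ E a b := by
    intro a b
    have hsum := hE1 a
    have herase : ∑ b' ∈ univ.erase b, E a b' ≤ ((Fintype.card F - 1 : ℕ) : ℝ) * t := by
      have := Finset.sum_le_card_nsmul (univ.erase b) (fun b' => E a b') t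
        (fun b' _ => hub a b')
      rwa [Finset.card_erase_of_mem (mem_univ b), card_univ, nsmul_eq_mul] at this
    have hcast : ((Fintype.card F - 1 : ℕ) : ℝ) = (Fintype.card F : ℝ) - 1 := by
      have h1 : 1 ≤ Fintype.card F := Fintype.card_pos
      push_cast [Nat.cast_sub h1]
      ring
    rw [hcast] at herase
    have hsplit : E a b + ∑ b' ∈ univ.erase b, E a b' = 0 := by
      rw [Finset.add_sum_erase univ (fun b' => E a b') (mem_univ b)]
      exact hsum
    linarith
  have hptq : ∀ (a : Fin m → F) (b : F),
      E a b * E a b ≤ ((Fintype.card F : ℝ) - 1) * (t * t) + (2 - (Fintype.card F : ℝ)) * (t * E a b) := by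
    intro a b
    nlinarith [mul_nonneg (sub_nonneg.2 (hub a b))
      (by linarith [hlb a b] : (0:ℝ) ≤ E a b + ((Fintype.card F : ℝ) - 1) * t)]
  have hsumq : ((Fintype.card F : ℝ) - 1) * ((Fintype.card F : ℝ) ^ m * (Fintype.card F : ℝ) ^ m) / (Fintype.card F : ℝ) ≤ (Fintype.card F : ℝ) ^ m * ((Fintype.card F : ℝ) * (((Fintype.card F : ℝ) - 1) * (t * t))) := by
    have h1 : ∑ a : Fin m → F, ∑ b : F, E a b * E a b
        ≤ ∑ a : Fin m → F, ∑ b : F, (((Fintype.card F : ℝ) - 1) * (t * t) + (2 - (Fintype.card F : ℝ)) * (t * E a b)) :=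
      Finset.sum_le_sum (fun a _ => Finset.sum_le_sum (fun b _ => hptq a b))
    have hper : ∀ a : Fin m → F,
        ∑ b : F, (((Fintype.card F : ℝ) - 1) * (t * t) + (2 - (Fintype.card F : ℝ)) * (t * E a b))
          = (Fintype.card F : ℝ) * (((Fintype.card F : ℝ) - 1) * (t * t)) := by
      intro a
      rw [Finset.sum_add_distrib, Finset.sum_const, card_univ, nsmul_eq_mul,
        ← Finset.mul_sum, ← Finset.mul_sum, hE1 a]
      ring
    rw [hE2, Finset.sum_congr rfl (fun a (_ : a ∈ univ) => hper a),
      Finset.sum_const, card_univ, nsmul_eq_mul, card_fun_cast] at h1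
    exact h1
  have htsq : (Fintype.card F : ℝ) ^ m / ((Fintype.card F : ℝ) * (Fintype.card F : ℝ)) ≤ t * t := by
    have hk1 : (0:ℝ) < (Fintype.card F : ℝ) - 1 := by linarith
    rw [div_le_iff₀ (by positivity)]
    rw [div_le_iff₀ hk0] at hsumq
    have heq : (Fintype.card F : ℝ) ^ m * ((Fintype.card F : ℝ) * (((Fintype.card F : ℝ) - 1) * (t * t))) * (Fintype.card F : ℝ)
        = ((Fintype.card F : ℝ) - 1) * ((Fintype.card F : ℝ) ^ m * (((Fintype.card F : ℝ) * (Fintype.card F : ℝ)) * (t * t))) := by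
      ring
    have h6 : ((Fintype.card F : ℝ) - 1) * ((Fintype.card F : ℝ) ^ m * (Fintype.card F : ℝ) ^ m)
        ≤ ((Fintype.card F : ℝ) - 1) * ((Fintype.card F : ℝ) ^ m * (((Fintype.card F : ℝ) * (Fintype.card F : ℝ)) * (t * t))) := by
      linarith [hsumq]
    have h7 := le_of_mul_le_mul_left h6 hk1
    have h8 := le_of_mul_le_mul_left h7 hkm0
    linarith [h8]
  set s : ℝ := (Fintype.card F : ℝ) ^ ((m : ℝ) / 2 - 1) with hs
  have hs0 : 0 < s := Real.rpow_pos_of_pos hk0 _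
  have hssq : s * s = (Fintype.card F : ℝ) ^ m / ((Fintype.card F : ℝ) * (Fintype.card F : ℝ)) := by
    rw [hs, ← Real.rpow_add hk0]
    have h4 : (m : ℝ) / 2 - 1 + ((m : ℝ) / 2 - 1) = (m : ℝ) - 2 := by ring
    rw [h4, Real.rpow_sub hk0, Real.rpow_natCast]
    rw [show (2:ℝ) = ((2:ℕ):ℝ) by norm_num, Real.rpow_natCast]
    ring_nf
  have hst : s ≤ t := by
    have h9 : s * s ≤ t * t := by rw [hssq]; exact htsq
    nlinarith [h9, hs0, ht0]
  refine ⟨p.1, p.2, ?_⟩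
  have hNval : Nf f p.1 p.2 = (Fintype.card F : ℝ) ^ m / (Fintype.card F : ℝ) + t := by rw [hT, hEab]; ring
  have hNcard : Nf f p.1 p.2
      = ((univ.filter fun x : Fin m → F =>
          f x = (∑ i, p.1 i * x i) + p.2).card : ℝ) := by
    rw [Nf, Finset.sum_boole]
  have hham : (hammingDist f (fun x => (∑ i, p.1 i * x i) + p.2) : ℝ)
      = (Fintype.card F : ℝ) ^ m - Nf f p.1 p.2 := by
    have hsplit := Finset.card_filter_add_card_filter_not
      (s := (univ : Finset (Fin m → F)))
      (fun x => f x = (∑ i, p.1 i * x i) + p.2)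
    rw [card_univ] at hsplit
    rw [show hammingDist f (fun x => (∑ i, p.1 i * x i) + p.2)
          = (univ.filter fun x : Fin m → F =>
              ¬ f x = (∑ i, p.1 i * x i) + p.2).card from rfl]
    rw [hNcard]
    have hcast := congrArg (fun n : ℕ => (n : ℝ)) hsplit
    simp only [Nat.cast_add] at hcast
    rw [card_fun_cast] at hcast
    linarith
  rw [hham, hNval]
  have hpow : (Fintype.card F : ℝ) ^ (m - 1) * (Fintype.card F : ℝ) = (Fintype.card F : ℝ) ^ m := by
    rw [← pow_succ]
    congr 1
    omega
  have h1 : (Fintype.card F : ℝ) ^ m / (Fintype.card F : ℝ) = (Fintype.card F : ℝ) ^ (m - 1) := by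
    rw [eq_comm, eq_div_iff (ne_of_gt hk0)]
    exact hpow
  rw [h1]
  nlinarith [hst]

end RMcovAux


/-- The covering radius of the first-order generalized Reed–Muller code `R_q(1,m)`:
the maximum over all functions `f : F_q^m → F_q` of the minimum Hamming distance
from `f` to an affine function. -/
noncomputable def rmCoveringRadius (F : Type) [Field F] [Fintype F] [DecidableEq F]
    (m : ℕ) : ℕ :=
  Finset.univ.sup fun f : (Fin m → F) → F =>
    sInf {d : ℕ | ∃ a : Fin m → F, ∃ b : F,
      d = hammingDist f (fun x => (∑ i, a i * x i) + b)}

/-- `ρ(1,m) ≤ (q-1)q^{m-1} - q^{m/2-1}`. -/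
theorem rmCoveringRadius_le
    {F : Type} [Field F] [Fintype F] [DecidableEq F] {m : ℕ} (hm : 1 ≤ m) :
    (rmCoveringRadius F m : ℝ) ≤
      ((Fintype.card F : ℝ) - 1) * (Fintype.card F : ℝ) ^ (m - 1)
        - (Fintype.card F : ℝ) ^ ((m : ℝ) / 2 - 1) := by
  classical
  have hdef : rmCoveringRadius F m
      = Finset.univ.sup (fun f : (Fin m → F) → F =>
          sInf {d : ℕ | ∃ a : Fin m → F, ∃ b : F,
            d = hammingDist f (fun x => (∑ i, a i * x i) + b)}) := rfl
  obtain ⟨f, -, hf⟩ := Finset.exists_mem_eq_sup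
    (Finset.univ : Finset ((Fin m → F) → F)) Finset.univ_nonempty
    (fun f : (Fin m → F) → F =>
      sInf {d : ℕ | ∃ a : Fin m → F, ∃ b : F,
        d = hammingDist f (fun x => (∑ i, a i * x i) + b)})
  rw [hdef, hf]
  obtain ⟨a, b, hab⟩ := RMcovAux.exists_affine_close f hm
  refine le_trans (Nat.cast_le.mpr (Nat.sInf_le ⟨a, b, rfl⟩)) hab
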